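/- Let M = ⟨V, D, ·_M⟩ be a Σ-PNmatrix and Ax ⊆ L_Σ(P). Suppose there exists Σ^d ⊆ Σ such that M is a rexpansion of some Σ^d-deterministic Σ-PNmatrix and every formula in Ax is Σ^d-simple. Define the Σ-PNmatrix M♯_Ax = ⟨V♯, D♯, ·_{M♯}⟩ by: V♯ = ⋃_{v ∈ Val_M^Ax} {f^A_v : A ∈ L_Σ(P)}; D♯ = {f ∈ V♯ : f(ε) ∈ D}; and for each k-place connective © ∈ Σ, ©_{M♯}(f₁,…,f_k) = ⋃_{v ∈ Val_M^Ax} {f^{©(A₁,…,A_k)}_v : A₁,…,A_k ∈ L_Σ(P) with f^{A_i}_v = f_i for 1 ≤ i ≤ k}. Then M♯_Ax is a rexpansion of M and the consequence relation ⊢_{M♯_Ax} coincides with ⊢_M^Ax, the strengthening of ⊢_M with axioms Ax. -/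
import Mathlib


set_option autoImplicit false

namespace PNPaper

/-- Formulas over a propositional signature given by a type `C` of connectives
with arity function `ar`, generated over a set (type) `P` of sentential variables. -/
inductive Fm (C : Type) (ar : C → ℕ) (P : Type) : Type where
  | var : P → Fm C ar P
  | app : (c : C) → (Fin (ar c) → Fm C ar P) → Fm C ar P

variable {C : Type} {ar : C → ℕ} {P Q : Type} {V W : Type}

/-- Substitution, extended to the unique endomorphism of the formula algebra. -/
def Fm.subst (σ : Q → Fm C ar P) : Fm C ar Q → Fm C ar P
  | .var q => σ q
  | .app c As => .app c (fun i => (As i).subst σ)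

/-- The set of substitution instances of formulas in `Ax`. -/
def instSet (Ax : Set (Fm C ar P)) : Set (Fm C ar P) :=
  {B | ∃ A ∈ Ax, ∃ σ : P → Fm C ar P, B = A.subst σ}

/-- A formula uses only connectives from `S`. -/
def Fm.usesOnly (S : Set C) : Fm C ar P → Prop
  | .var _ => True
  | .app c As => c ∈ S ∧ ∀ i, (As i).usesOnly S

/-- All variables of the formula belong to `Vs`. -/
def Fm.varsIn (Vs : Set P) : Fm C ar P → Prop
  | .var p => p ∈ Vs
  | .app _ As => ∀ i, (As i).varsIn Vs

/-- A Σ-PNmatrix: a set of truth-values (carrier), designated values,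
and a (possibly partial, non-deterministic) truth-table for each connective. -/
structure Mat (C : Type) (ar : C → ℕ) (V : Type) where
  carrier : Set V
  desig : Set V
  int : (c : C) → (Fin (ar c) → V) → Set V

/-- Well-formedness: `D ⊆ V` and truth-tables take values in `V`. -/
def Mat.WF (M : Mat C ar V) : Prop :=
  M.desig ⊆ M.carrier ∧
  ∀ (c : C) (xs : Fin (ar c) → V), (∀ i, xs i ∈ M.carrier) → M.int c xs ⊆ M.carrier

/-- An `M`-valuation. -/
def Mat.IsVal (M : Mat C ar V) (v : Fm C ar P → V) : Prop :=
  (∀ A, v A ∈ M.carrier) ∧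
  ∀ (c : C) (As : Fin (ar c) → Fm C ar P), v (.app c As) ∈ M.int c (fun i => v (As i))

/-- The (single conclusion) consequence relation `⊢_M`. -/
def Mat.Conseq (M : Mat C ar V) (Γ : Set (Fm C ar P)) (A : Fm C ar P) : Prop :=
  ∀ v : Fm C ar P → V, M.IsVal v → (∀ B ∈ Γ, v B ∈ M.desig) → v A ∈ M.desig

/-- The strengthening `⊢_M^Ax` of `⊢_M` with (schema) axioms `Ax`. -/
def Mat.ConseqAx (M : Mat C ar V) (Ax Γ : Set (Fm C ar P)) (A : Fm C ar P) : Prop :=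
  M.Conseq (Γ ∪ instSet Ax) A

/-- The multiple-conclusion consequence relation `▷_M`. -/
def Mat.MConseq (M : Mat C ar V) (Γ Δ : Set (Fm C ar P)) : Prop :=
  ∀ v : Fm C ar P → V, M.IsVal v → (∀ B ∈ Γ, v B ∈ M.desig) → ∃ B ∈ Δ, v B ∈ M.desig

/-- The set `A_M(x₁,…,xₙ)` of possible values of `A` when `pᵢ ↦ xᵢ`. -/
def Mat.fmSet (M : Mat C ar V) (n : ℕ) (A : Fm C ar ℕ) (xs : Fin n → V) : Set V :=
  {y | ∃ v : Fm C ar ℕ → V, M.IsVal v ∧ (∀ i : Fin n, v (Fm.var i.1) = xs i) ∧ v A = y}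

/-- `M` is `S`-deterministic. -/
def Mat.DetOn (M : Mat C ar V) (S : Set C) : Prop :=
  ∀ c ∈ S, ∀ xs : Fin (ar c) → V, (∀ i, xs i ∈ M.carrier) → (M.int c xs).Subsingleton

/-- `M` is total. -/
def Mat.Total (M : Mat C ar V) : Prop :=
  ∀ (c : C) (xs : Fin (ar c) → V), (∀ i, xs i ∈ M.carrier) → (M.int c xs).Nonempty

/-- `M'` is a refinement of `M`. -/
def IsRefinement (M' M : Mat C ar V) : Prop :=
  M'.carrier ⊆ M.carrier ∧
  M'.desig = M.desig ∩ M'.carrier ∧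
  ∀ (c : C) (xs : Fin (ar c) → V), (∀ i, xs i ∈ M'.carrier) → M'.int c xs ⊆ M.int c xs

/-- `E` is an expansion function for `M` with contraction `ct`:
the sets `E x` (for truth-values `x` of `M`) are non-empty and `ct` picks, for each
element of `E x`, the unique `x` it expands (this forces pairwise disjointness). -/
def IsExpansion (M : Mat C ar V) (E : V → Set W) (ct : W → V) : Prop :=
  (∀ x ∈ M.carrier, (E x).Nonempty) ∧
  (∀ x ∈ M.carrier, ∀ y ∈ E x, ct y = x)

/-- The `E`-expansion of `M`. -/
def expMat (M : Mat C ar V) (E : V → Set W) (ct : W → V) : Mat C ar W where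
  carrier := ⋃ x ∈ M.carrier, E x
  desig := ⋃ x ∈ M.desig, E x
  int := fun c ys => ⋃ x ∈ M.int c (fun i => ct (ys i)), E x

/-- A rexpansion of `M` is a refinement of some `E`-expansion of `M`. -/
def IsRexpansion (M' : Mat C ar W) (M : Mat C ar V) : Prop :=
  ∃ (E : V → Set W) (ct : W → V), IsExpansion M E ct ∧ IsRefinement M' (expMat M E ct)

/-- The 1-place connectives of the signature that are not in `Σᵈ`. -/
def UC (C : Type) (ar : C → ℕ) (Sd : Set C) : Type := {c : C // ar c = 1 ∧ c ∉ Sd}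

/-- The formula `wA` obtained by prefixing `A` with the string `w ∈ U*` of
1-place connectives. -/
def prefixFm {C : Type} {ar : C → ℕ} {Sd : Set C}
    (w : List (UC C ar Sd)) (A : Fm C ar ℕ) : Fm C ar ℕ :=
  w.foldr (fun c B => Fm.app c.1 (fun _ => B)) A

/-- A set of strings is closed under taking prefixes. -/
def PrefixClosed {α : Type} (Th : Set (List α)) : Prop :=
  ∀ s t : List α, s <+: t → t ∈ Th → s ∈ Th

/-- `B` is a `Σᵈ`-simple formula (based on some connective `c`), with all prefixes of
the strings used in its decomposition belonging to the look-ahead set `Th`: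
`B = A^σ` for a structure formula `A ∈ L_{Σᵈ}({q₁,…,qₙ,r₁,…,r_m})` and a substitution
`σ` with `σ(qᵢ) = wᵢ p_{jᵢ}` and `σ(r_l) = u_l c(p₁,…,p_k)`. -/
def SimpleWithin {C : Type} {ar : C → ℕ} (Sd : Set C)
    (Th : Set (List (UC C ar Sd))) (B : Fm C ar ℕ) : Prop :=
  ∃ (c : C) (n m : ℕ) (A : Fm C ar (Fin n ⊕ Fin m))
    (w : Fin n → List (UC C ar Sd)) (j : Fin n → Fin (ar c))
    (u : Fin m → List (UC C ar Sd)) (p : Fin (ar c) → ℕ),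
      Function.Injective p ∧ A.usesOnly Sd ∧
      B = A.subst (Sum.elim
            (fun i => prefixFm (w i) (Fm.var (p (j i))))
            (fun l => prefixFm (u l) (Fm.app c (fun i => Fm.var (p i))))) ∧
      (∀ i t, t <+: w i → t ∈ Th) ∧ (∀ l t, t <+: u l → t ∈ Th)

/-- `Val_M^Ax`: the `M`-valuations designating all instances of the axioms. -/
def ValAx {C : Type} {ar : C → ℕ} {V : Type} (M : Mat C ar V)
    (Ax : Set (Fm C ar ℕ)) : Set (Fm C ar ℕ → V) :=
  {v | M.IsVal v ∧ ∀ B ∈ instSet Ax, v B ∈ M.desig}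

/-- The look-ahead function `f^A_v : Θ → V`, `f^A_v(w) = v(wA)`. -/
def fA {C : Type} {ar : C → ℕ} {V : Type} {Sd : Set C}
    (Th : Set (List (UC C ar Sd))) (v : Fm C ar ℕ → V) (A : Fm C ar ℕ) : ↥Th → V :=
  fun w => v (prefixFm w.1 A)

/-- The PNmatrix `M♯_Ax` of the ♯-construction (Theorem `theconstruction`). -/
def sharpMat {C : Type} {ar : C → ℕ} {V : Type} {Sd : Set C}
    (M : Mat C ar V) (Ax : Set (Fm C ar ℕ)) (Th : Set (List (UC C ar Sd)))
    (hε : [] ∈ Th) : Mat C ar (↥Th → V) where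
  carrier := {f | ∃ v ∈ ValAx M Ax, ∃ A, f = fA Th v A}
  desig := {f | (∃ v ∈ ValAx M Ax, ∃ A, f = fA Th v A) ∧ f ⟨[], hε⟩ ∈ M.desig}
  int := fun c fs =>
    {g | ∃ v ∈ ValAx M Ax, ∃ As : Fin (ar c) → Fm C ar ℕ,
      (∀ i, fA Th v (As i) = fs i) ∧ g = fA Th v (Fm.app c As)}


section Aux

lemma Fm.subst_subst {C : Type} {ar : C → ℕ} {P Q R : Type}
    (A : Fm C ar R) (σ : R → Fm C ar Q) (τ : Q → Fm C ar P) :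
    (A.subst σ).subst τ = A.subst (fun q => (σ q).subst τ) := by
  induction A with
  | var q => rfl
  | app c As ih => exact congrArg (Fm.app c) (funext fun i => ih i)

lemma prefixFm_subst {C : Type} {ar : C → ℕ} {Sd : Set C}
    (w : List (UC C ar Sd)) (A : Fm C ar ℕ) (τ : ℕ → Fm C ar ℕ) :
    (prefixFm w A).subst τ = prefixFm w (A.subst τ) := by
  induction w with
  | nil => rfl
  | cons d w ih =>
    show Fm.app d.1 _ = Fm.app d.1 _
    exact congrArg (Fm.app d.1) (funext fun _ => ih)

lemma prefixFm_append {C : Type} {ar : C → ℕ} {Sd : Set C}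
    (s t : List (UC C ar Sd)) (A : Fm C ar ℕ) :
    prefixFm (s ++ t) A = prefixFm s (prefixFm t A) := by
  simp [prefixFm, List.foldr_append]

/-- Facts about a rexpansion: contraction lands in the carrier. -/
lemma rex_ct_carrier {C : Type} {ar : C → ℕ} {V V₀ : Type}
    (M : Mat C ar V) (M₀ : Mat C ar V₀) (E : V₀ → Set V) (ct : V → V₀)
    (hexp : IsExpansion M₀ E ct) (href : IsRefinement M (expMat M₀ E ct)) :
    ∀ y ∈ M.carrier, ct y ∈ M₀.carrier ∧ y ∈ E (ct y) := by
  intro y hy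
  have := href.1 hy
  simp only [expMat, Set.mem_iUnion] at this
  obtain ⟨x, hx, hyx⟩ := this
  have hct : ct y = x := hexp.2 x hx y hyx
  rw [hct]; exact ⟨hx, hyx⟩

lemma rex_ct_int {C : Type} {ar : C → ℕ} {V V₀ : Type}
    (M : Mat C ar V) (M₀ : Mat C ar V₀) (hWF₀ : M₀.WF) (E : V₀ → Set V) (ct : V → V₀)
    (hexp : IsExpansion M₀ E ct) (href : IsRefinement M (expMat M₀ E ct)) :
    ∀ (c : C) (xs : Fin (ar c) → V), (∀ i, xs i ∈ M.carrier) →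
      ∀ y ∈ M.int c xs, ct y ∈ M₀.int c (fun i => ct (xs i)) := by
  intro c xs hxs y hy
  have := href.2.2 c xs hxs hy
  simp only [expMat, Set.mem_iUnion] at this
  obtain ⟨x, hx, hyx⟩ := this
  have hxc : x ∈ M₀.carrier :=
    hWF₀.2 c _ (fun i => (rex_ct_carrier M M₀ E ct hexp href (xs i) (hxs i)).1) hx
  have hct : ct y = x := hexp.2 x hxc y hyx
  rw [hct]; exact hx

lemma rex_ct_desig {C : Type} {ar : C → ℕ} {V V₀ : Type}
    (M : Mat C ar V) (M₀ : Mat C ar V₀) (hWF₀ : M₀.WF) (E : V₀ → Set V) (ct : V → V₀)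
    (hexp : IsExpansion M₀ E ct) (href : IsRefinement M (expMat M₀ E ct)) :
    ∀ y ∈ M.carrier, (y ∈ M.desig ↔ ct y ∈ M₀.desig) := by
  intro y hy
  constructor
  · intro hyd
    rw [href.2.1] at hyd
    have := hyd.1
    simp only [expMat, Set.mem_iUnion] at this
    obtain ⟨x, hx, hyx⟩ := this
    have hct : ct y = x := hexp.2 x (hWF₀.1 hx) y hyx
    rw [hct]; exact hx
  · intro hctd
    rw [href.2.1]
    refine ⟨?_, hy⟩
    simp only [expMat, Set.mem_iUnion]
    exact ⟨ct y, hctd, (rex_ct_carrier M M₀ E ct hexp href y hy).2⟩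

/-- Determinism transfer: on `Sd`-structure formulas, the `ct`-value of a valuation
only depends on the (exact) values of the substituted leaves. -/
lemma det_transfer {C : Type} {ar : C → ℕ} {V V₀ : Type} {Sd : Set C}
    (M : Mat C ar V) (M₀ : Mat C ar V₀) (hWF₀ : M₀.WF) (hdet : M₀.DetOn Sd)
    (E : V₀ → Set V) (ct : V → V₀)
    (hexp : IsExpansion M₀ E ct) (href : IsRefinement M (expMat M₀ E ct))
    {Q : Type} (A : Fm C ar Q) (hA : A.usesOnly Sd)
    (v₁ v₂ : Fm C ar ℕ → V) (hv₁ : M.IsVal v₁) (hv₂ : M.IsVal v₂)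
    (σ₁ σ₂ : Q → Fm C ar ℕ) (hleaf : ∀ q, v₁ (σ₁ q) = v₂ (σ₂ q)) :
    ct (v₁ (A.subst σ₁)) = ct (v₂ (A.subst σ₂)) := by
  induction A with
  | var q => rw [show (Fm.var q).subst σ₁ = σ₁ q from rfl,
      show (Fm.var q).subst σ₂ = σ₂ q from rfl, hleaf q]
  | app d As ih =>
    obtain ⟨hd, hAs⟩ := hA
    have h₁ : v₁ ((Fm.app d As).subst σ₁) ∈ M.int d (fun i => v₁ ((As i).subst σ₁)) :=
      hv₁.2 d _
    have h₂ : v₂ ((Fm.app d As).subst σ₂) ∈ M.int d (fun i => v₂ ((As i).subst σ₂)) :=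
      hv₂.2 d _
    have c₁ := rex_ct_int M M₀ hWF₀ E ct hexp href d _ (fun i => hv₁.1 _) _ h₁
    have c₂ := rex_ct_int M M₀ hWF₀ E ct hexp href d _ (fun i => hv₂.1 _) _ h₂
    have heq : (fun i => ct (v₁ ((As i).subst σ₁))) = (fun i => ct (v₂ ((As i).subst σ₂))) :=
      funext fun i => ih i (hAs i)
    rw [heq] at c₁
    exact hdet d hd _ (fun i => (rex_ct_carrier M M₀ E ct hexp href _ (hv₂.1 _)).1) c₁ c₂

/-- The shift property of valuations of the ♯-matrix. -/
lemma sharp_shift {C : Type} {ar : C → ℕ} {V : Type} {Sd : Set C}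
    (M : Mat C ar V) (Ax : Set (Fm C ar ℕ)) (Th : Set (List (UC C ar Sd)))
    (hε : [] ∈ Th) (hpc : PrefixClosed Th)
    (s : Fm C ar ℕ → (↥Th → V)) (hs : (sharpMat M Ax Th hε).IsVal s) :
    ∀ (w : List (UC C ar Sd)) (X : Fm C ar ℕ) (t : List (UC C ar Sd))
      (h : t ++ w ∈ Th) (h' : t ∈ Th),
      s (prefixFm w X) ⟨t, h'⟩ = s X ⟨t ++ w, h⟩ := by
  intro w
  induction w with
  | nil =>
    intro X t h h'
    exact congrArg (s X) (Subtype.ext (List.append_nil t).symm)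
  | cons d w ih =>
    intro X t h h'
    have hmem := hs.2 d.1 (fun _ => prefixFm w X)
    obtain ⟨v, hv, Bs, hBs, happ⟩ := hmem
    have hd1 : ar d.1 = 1 := d.2.1
    obtain ⟨i0, hi0⟩ : ∃ i : Fin (ar d.1), i.1 = 0 := ⟨⟨0, by omega⟩, rfl⟩
    have hconst : Fm.app d.1 Bs = prefixFm [d] (Bs i0) := by
      show Fm.app d.1 Bs = Fm.app d.1 (fun _ => Bs i0)
      refine congrArg (Fm.app d.1) (funext fun i => ?_)
      have : i = i0 := Fin.ext (by have := i.isLt; omega)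
      rw [this]
    have htd : t ++ [d] ∈ Th := by
      refine hpc _ (t ++ (d :: w)) ⟨w, by simp⟩ h
    have htdw : (t ++ [d]) ++ w ∈ Th := by
      have : (t ++ [d]) ++ w = t ++ (d :: w) := by simp
      rw [this]; exact h
    calc s (prefixFm (d :: w) X) ⟨t, h'⟩
        = fA Th v (Fm.app d.1 Bs) ⟨t, h'⟩ := congrFun happ ⟨t, h'⟩
      _ = v (prefixFm t (Fm.app d.1 Bs)) := rfl
      _ = v (prefixFm (t ++ [d]) (Bs i0)) := by rw [hconst, prefixFm_append]
      _ = fA Th v (Bs i0) ⟨t ++ [d], htd⟩ := rfl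
      _ = s (prefixFm w X) ⟨t ++ [d], htd⟩ := by rw [hBs i0]
      _ = s X ⟨(t ++ [d]) ++ w, htdw⟩ := ih X (t ++ [d]) htdw htd
      _ = s X ⟨t ++ (d :: w), h⟩ := congrArg (s X) (Subtype.ext (by simp))

end Aux

/-- Theorem `theconstruction`: if `M` is a rexpansion of some
`Σᵈ`-deterministic PNmatrix and all axioms in `Ax` are `Σᵈ`-simple (with look-ahead
set `Θ_Ax = Th`), then `M♯_Ax` is a rexpansion of `M` and `⊢_{M♯_Ax}` coincides with
the strengthening `⊢_M^Ax`. -/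
theorem stmt9 {C : Type} {ar : C → ℕ} {V V₀ : Type} {Sd : Set C}
    (M : Mat C ar V) (hWF : M.WF) (Ax : Set (Fm C ar ℕ))
    (M₀ : Mat C ar V₀) (hWF₀ : M₀.WF) (hdet : M₀.DetOn Sd) (hrex : IsRexpansion M M₀)
    (Th : Set (List (UC C ar Sd))) (hε : [] ∈ Th) (hpc : PrefixClosed Th)
    (hAx : ∀ B ∈ Ax, SimpleWithin Sd Th B) :
    IsRexpansion (sharpMat M Ax Th hε) M ∧
    ∀ (Γ : Set (Fm C ar ℕ)) (A : Fm C ar ℕ),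
      M.ConseqAx Ax Γ A ↔ (sharpMat M Ax Th hε).Conseq Γ A := by
  obtain ⟨E, ct, hexp, href⟩ := hrex
  constructor
  · -- the ♯-matrix is a rexpansion of M
    refine ⟨fun x => {f : ↥Th → V | f ⟨[], hε⟩ = x}, fun f => f ⟨[], hε⟩,
      ⟨fun x _ => ⟨fun _ => x, rfl⟩, fun x _ y hy => hy⟩, ?_, ?_, ?_⟩
    · rintro f ⟨v, hv, A, rfl⟩
      simp only [expMat, Set.mem_iUnion]
      exact ⟨v A, hv.1.1 A, rfl⟩
    · ext f
      constructor
      · rintro ⟨hc, hd⟩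
        refine ⟨?_, hc⟩
        simp only [expMat, Set.mem_iUnion]
        exact ⟨f ⟨[], hε⟩, hd, rfl⟩
      · rintro ⟨hd, hc⟩
        refine ⟨hc, ?_⟩
        simp only [expMat, Set.mem_iUnion] at hd
        obtain ⟨x, hx, hfx⟩ := hd
        rw [show f ⟨[], hε⟩ = x from hfx]
        exact hx
    · rintro c fs hfs g ⟨v, hv, As, hAs, rfl⟩
      simp only [expMat, Set.mem_iUnion]
      refine ⟨v (Fm.app c As), ?_, rfl⟩
      have hbase := hv.1.2 c As
      have harg : (fun i => v (As i)) = fun i => fs i ⟨[], hε⟩ := by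
        funext i; rw [← hAs i]; rfl
      rw [harg] at hbase
      exact hbase
  · intro Γ A
    constructor
    · -- ⊢_M^Ax  ⇒  ⊢_{M♯}
      intro h s hs hΓ
      let u : Fm C ar ℕ → V := fun X => s X ⟨[], hε⟩
      have huval : M.IsVal u := by
        constructor
        · intro X
          obtain ⟨v, hv, A', heq⟩ := hs.1 X
          show s X ⟨[], hε⟩ ∈ M.carrier
          rw [heq]
          exact hv.1.1 A'
        · intro c As
          obtain ⟨v, hv, Bs, hBs, heq⟩ := hs.2 c As
          have h1 : u (Fm.app c As) = v (Fm.app c Bs) := by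
            show s (Fm.app c As) ⟨[], hε⟩ = _; rw [heq]; rfl
          have h2 : (fun i => u (As i)) = fun i => v (Bs i) := by
            funext i
            exact (congrFun (hBs i) ⟨[], hε⟩).symm
          rw [h1, h2]
          exact hv.1.2 c Bs
      have hudes : ∀ B ∈ instSet Ax, u B ∈ M.desig := by
        rintro _ ⟨B, hB, τ, rfl⟩
        obtain ⟨c, n, m, A0, w, j, uu, p, hp, hAuse, hBeq, hw, huu⟩ := hAx B hB
        obtain ⟨v, hv, Bs, hBs, happ⟩ := hs.2 c (fun i => τ (p i))
        classical
        let ρ : ℕ → Fm C ar ℕ :=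
          fun q => if hq : ∃ i : Fin (ar c), p i = q then Bs hq.choose else Fm.var q
        have hρ : ∀ i, ρ (p i) = Bs i := by
          intro i
          show (if hq : ∃ i' : Fin (ar c), p i' = p i then Bs hq.choose else Fm.var (p i)) = Bs i
          rw [dif_pos ⟨i, rfl⟩]
          exact congrArg Bs (hp (⟨i, rfl⟩ : ∃ i', p i' = p i).choose_spec)
        set σB : (Fin n ⊕ Fin m) → Fm C ar ℕ := Sum.elim
            (fun i => prefixFm (w i) (Fm.var (p (j i))))
            (fun l => prefixFm (uu l) (Fm.app c (fun i => Fm.var (p i)))) with hσB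
        have hleaf : ∀ q : Fin n ⊕ Fin m, v ((σB q).subst ρ) = u ((σB q).subst τ) := by
          rintro (i | l)
          · have e1 : (σB (Sum.inl i)).subst ρ = prefixFm (w i) (Bs (j i)) := by
              show (prefixFm (w i) (Fm.var (p (j i)))).subst ρ = _
              rw [prefixFm_subst]
              exact congrArg (prefixFm (w i)) (hρ (j i))
            have e2 : (σB (Sum.inl i)).subst τ = prefixFm (w i) (τ (p (j i))) := by
              show (prefixFm (w i) (Fm.var (p (j i)))).subst τ = _
              rw [prefixFm_subst]
              rfl
            have hwi : w i ∈ Th := hw i (w i) List.prefix_rfl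
            rw [e1, e2]
            have l1 : v (prefixFm (w i) (Bs (j i))) = fA Th v (Bs (j i)) ⟨w i, hwi⟩ := rfl
            have l3 := sharp_shift M Ax Th hε hpc s hs (w i) (τ (p (j i))) [] hwi hε
            rw [l1, hBs (j i)]
            exact l3.symm
          · have e1 : (σB (Sum.inr l)).subst ρ = prefixFm (uu l) (Fm.app c Bs) := by
              show (prefixFm (uu l) (Fm.app c (fun i => Fm.var (p i)))).subst ρ = _
              rw [prefixFm_subst]
              exact congrArg (prefixFm (uu l)) (congrArg (Fm.app c) (funext fun i => hρ i))
            have e2 : (σB (Sum.inr l)).subst τ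
                = prefixFm (uu l) (Fm.app c (fun i => τ (p i))) := by
              show (prefixFm (uu l) (Fm.app c (fun i => Fm.var (p i)))).subst τ = _
              rw [prefixFm_subst]
              rfl
            have hul : uu l ∈ Th := huu l (uu l) List.prefix_rfl
            rw [e1, e2]
            have l1 : v (prefixFm (uu l) (Fm.app c Bs)) = fA Th v (Fm.app c Bs) ⟨uu l, hul⟩ := rfl
            have l3 := sharp_shift M Ax Th hε hpc s hs (uu l)
              (Fm.app c (fun i => τ (p i))) [] hul hε
            rw [l1, ← happ]
            exact l3.symm
        have hct := det_transfer M M₀ hWF₀ hdet E ct hexp href A0 hAuse v u hv.1 huval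
          (fun q => (σB q).subst ρ) (fun q => (σB q).subst τ) hleaf
        have hBρ : A0.subst (fun q => (σB q).subst ρ) = B.subst ρ := by
          rw [hBeq, Fm.subst_subst]
        have hBτ : A0.subst (fun q => (σB q).subst τ) = B.subst τ := by
          rw [hBeq, Fm.subst_subst]
        rw [hBρ, hBτ] at hct
        have hvdes : v (B.subst ρ) ∈ M.desig := hv.2 _ ⟨B, hB, ρ, rfl⟩
        have h1 : ct (v (B.subst ρ)) ∈ M₀.desig :=
          (rex_ct_desig M M₀ hWF₀ E ct hexp href _ (hv.1.1 _)).1 hvdes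
        rw [hct] at h1
        exact (rex_ct_desig M M₀ hWF₀ E ct hexp href _ (huval.1 _)).2 h1
      have hAll : ∀ B ∈ Γ ∪ instSet Ax, u B ∈ M.desig := by
        rintro B (hB | hB)
        · exact (hΓ B hB).2
        · exact hudes B hB
      exact ⟨hs.1 A, h u huval hAll⟩
    · -- ⊢_{M♯}  ⇒  ⊢_M^Ax
      intro h v hv hAll
      have hvAx : v ∈ ValAx M Ax := ⟨hv, fun B hB => hAll B (Or.inr hB)⟩
      have hsval : (sharpMat M Ax Th hε).IsVal (fun X => fA Th v X) :=
        ⟨fun X => ⟨v, hvAx, X, rfl⟩, fun c As => ⟨v, hvAx, As, fun _ => rfl, rfl⟩⟩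
      exact (h (fun X => fA Th v X) hsval
        (fun B hB => ⟨⟨v, hvAx, B, rfl⟩, hAll B (Or.inl hB)⟩)).2


end PNPaper
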